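/- Let n≥2 be an integer and g a nonnegative integer with gcd(n,g)=1. Then det C_{n,g}(L) = det(Q_g) · [ (1 − L_{n+1})^{n−1} + (L_n − 2)^{n−2} · Σ_{i=1}^{n−1} ( L_{i+2} − 3L_{i+1} ) · ((1 − L_{n+1})/(L_n − 2))^{i−1} ]. -/

import Mathlib

/-- The `g`-circulant matrix of size `n` with first row `(a 0, a 1, …, a (n-1))`:
its `(i,j)` entry (0-indexed) equals `a ((j - i*g) mod n)`. -/
def gCirc {α : Type*} (n g : ℕ) (a : ℕ → α) : Matrix (Fin n) (Fin n) α :=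
  Matrix.of fun i j => a ((j.val + (n - (i.val * g) % n)) % n)

/-- `Q_g`: the `g`-circulant matrix with first row `(1,0,…,0)`. -/
def Qg (n g : ℕ) : Matrix (Fin n) (Fin n) ℝ :=
  gCirc n g (fun m => if m = 0 then (1 : ℝ) else 0)


/-! ### Lucas number bounds -/

lemma lucas_ge_one (L : ℕ → ℝ) (hL0 : L 0 = 2) (hL1 : L 1 = 1)
    (hrec : ∀ m : ℕ, L (m + 2) = L (m + 1) + L m) : ∀ m, 1 ≤ L m := by
  have h : ∀ m, 1 ≤ L m ∧ 1 ≤ L (m + 1) := by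
    intro m
    induction m with
    | zero => refine ⟨by rw [hL0]; norm_num, by rw [hL1]⟩
    | succ k ih => exact ⟨ih.2, by rw [hrec]; linarith [ih.1, ih.2]⟩
  exact fun m => (h m).1

lemma lucas_ge_three (L : ℕ → ℝ) (hL0 : L 0 = 2) (hL1 : L 1 = 1)
    (hrec : ∀ m : ℕ, L (m + 2) = L (m + 1) + L m) : ∀ m, 3 ≤ L (m + 2) := by
  have h1 := lucas_ge_one L hL0 hL1 hrec
  intro m
  cases m with
  | zero => rw [hrec, hL0, hL1]; norm_num
  | succ k => rw [hrec, hrec]; linarith [h1 k, h1 (k + 1)]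

/-! ### Factorization through Qg -/

lemma gCirc_factor (n r : ℕ) (hn : 2 ≤ n) (a : ℕ → ℝ) :
    gCirc n r a = Qg n r * gCirc n 1 a := by
  ext i j
  rw [Matrix.mul_apply]
  have hm : (i.val * r) % n < n := Nat.mod_lt _ (by omega)
  rw [Finset.sum_eq_single (⟨(i.val * r) % n, hm⟩ : Fin n)]
  · simp only [Qg, gCirc, Matrix.of_apply]
    have h1 : (((i.val * r) % n : ℕ) + (n - (i.val * r) % n)) % n = 0 := by
      rw [show ((i.val * r) % n + (n - (i.val * r) % n)) = n from by omega, Nat.mod_self]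
    rw [h1]
    have h2 : ((i.val * r) % n * 1) % n = (i.val * r) % n := by
      rw [mul_one]; exact Nat.mod_mod_of_dvd _ dvd_rfl
    rw [h2]
    simp
  · intro b _ hb
    simp only [Qg, gCirc, Matrix.of_apply]
    have hb' : b.val ≠ (i.val * r) % n := by
      intro h; apply hb; exact Fin.ext h
    have : (b.val + (n - (i.val * r) % n)) % n ≠ 0 := by
      rcases Nat.lt_or_ge b.val ((i.val * r) % n) with h | h
      · rw [Nat.mod_eq_of_lt (by omega)]; omega
      · rw [show b.val + (n - (i.val * r) % n) = (b.val - (i.val * r) % n) + n from by omega,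
          Nat.add_mod_right, Nat.mod_eq_of_lt (by omega)]
        omega
    rw [if_neg this, zero_mul]
  · intro h; exact absurd (Finset.mem_univ _) h

/-! ### The triangular transformation matrices -/

def Umat (n : ℕ) : Matrix (Fin n) (Fin n) ℝ := Matrix.of fun i k =>
  (if (k : ℕ) = i then 1 else 0)
  - (if i.val + 3 ≤ n ∧ k.val = i.val + 1 then 1 else 0)
  - (if i.val + 3 ≤ n ∧ k.val = i.val + 2 then 1 else 0)
  - (if i.val + 2 = n ∧ k.val = n - 1 then 3 else 0)

def Vmat (n : ℕ) (t : ℝ) : Matrix (Fin n) (Fin n) ℝ := Matrix.of fun k j =>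
  if j.val + 1 = n then (if k = j then 1 else 0)
  else if k.val ≤ j.val then t ^ (j.val - k.val) else 0

lemma Umat_det (n : ℕ) : (Umat n).det = 1 := by
  have h := Matrix.det_of_upperTriangular (M := Umat n) ?_
  · rw [h]
    have : ∀ i : Fin n, Umat n i i = 1 := by
      intro i
      simp only [Umat, Matrix.of_apply]
      have h1 : ¬(i.val + 3 ≤ n ∧ i.val = i.val + 1) := by omega
      have h2 : ¬(i.val + 3 ≤ n ∧ i.val = i.val + 2) := by omega
      have h3 : ¬(i.val + 2 = n ∧ i.val = n - 1) := by
        rintro ⟨a, b⟩; omega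
      rw [if_neg h1, if_neg h2, if_neg h3]
      simp
    rw [Finset.prod_congr rfl (fun i _ => this i), Finset.prod_const_one]
  · intro i j hij
    have hij' : j.val < i.val := hij
    simp only [Umat, Matrix.of_apply]
    have h0 : ¬(j.val = i.val) := by omega
    have h1 : ¬(i.val + 3 ≤ n ∧ j.val = i.val + 1) := by omega
    have h2 : ¬(i.val + 3 ≤ n ∧ j.val = i.val + 2) := by omega
    have h3 : ¬(i.val + 2 = n ∧ j.val = n - 1) := by
      rintro ⟨a, b⟩
      have := j.isLt
      omega
    rw [if_neg h0, if_neg h1, if_neg h2, if_neg h3]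
    ring

lemma Vmat_det (n : ℕ) (t : ℝ) : (Vmat n t).det = 1 := by
  have h := Matrix.det_of_upperTriangular (M := Vmat n t) ?_
  · rw [h]
    have : ∀ i : Fin n, Vmat n t i i = 1 := by
      intro i
      simp only [Vmat, Matrix.of_apply]
      by_cases h1 : i.val + 1 = n
      · rw [if_pos h1]; simp
      · rw [if_neg h1, if_pos (le_refl _), Nat.sub_self, pow_zero]
    rw [Finset.prod_congr rfl (fun i _ => this i), Finset.prod_const_one]
  · intro i j hij
    have hij' : j.val < i.val := hij
    simp only [Vmat, Matrix.of_apply]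
    by_cases h1 : j.val + 1 = n
    · rw [if_pos h1, if_neg (by intro h; rw [h] at hij'; omega)]
    · rw [if_neg h1, if_neg (by omega)]

/-! ### Row combination values -/

lemma wA (L : ℕ → ℝ) (hL0 : L 0 = 2) (hL1 : L 1 = 1)
    (hrec : ∀ m : ℕ, L (m + 2) = L (m + 1) + L m) (n i l : ℕ) (hi : i + 3 ≤ n) (hl : l < n) :
    L ((l + (n - i)) % n + 1) -
      (L ((l + (n - (i + 1))) % n + 1) + L ((l + (n - (i + 2))) % n + 1)) =
    if l = i then 1 - L (n + 1) else if l = i + 1 then 2 - L n else 0 := by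
  rcases eq_or_ne l i with rfl | h0
  · rw [if_pos rfl,
      show l + (n - l) = n from by omega, Nat.mod_self,
      show l + (n - (l + 1)) = n - 1 from by omega, Nat.mod_eq_of_lt (show n - 1 < n from by omega),
      show l + (n - (l + 2)) = n - 2 from by omega, Nat.mod_eq_of_lt (show n - 2 < n from by omega),
      show n - 1 + 1 = n from by omega, show n - 2 + 1 = n - 1 from by omega, hL1]
    have h : L (n + 1) = L n + L (n - 1) := by
      obtain ⟨m, rfl⟩ : ∃ m, n = m + 2 := ⟨n - 2, by omega⟩
      rw [show m + 2 - 1 = m + 1 from rfl]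
      exact hrec (m + 1)
    linarith
  rcases eq_or_ne l (i + 1) with rfl | h1
  · rw [if_neg h0, if_pos rfl,
      show i + 1 + (n - (i + 1)) = n from by omega, Nat.mod_self,
      show i + 1 + (n - i) = 1 + n from by omega, Nat.add_mod_right,
      Nat.mod_eq_of_lt (show 1 < n from by omega),
      show i + 1 + (n - (i + 2)) = n - 1 from by omega,
      Nat.mod_eq_of_lt (show n - 1 < n from by omega),
      show n - 1 + 1 = n from by omega, zero_add, hL1]
    have h2 : L 2 = 3 := by rw [hrec 0, hL0, hL1]; norm_num
    rw [show (1 : ℕ) + 1 = 2 from rfl, h2]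
    ring
  rcases Nat.lt_or_ge l i with h2 | h2
  · rw [if_neg h0, if_neg h1]
    obtain ⟨s, hs⟩ : ∃ s, l + (n - i) = s + 2 := ⟨l + (n - i) - 2, by omega⟩
    rw [hs, show l + (n - (i + 1)) = s + 1 from by omega,
      show l + (n - (i + 2)) = s from by omega,
      Nat.mod_eq_of_lt (show s + 2 < n from by omega),
      Nat.mod_eq_of_lt (show s + 1 < n from by omega),
      Nat.mod_eq_of_lt (show s < n from by omega)]
    rw [hrec (s + 1)]
    ring
  · have h3 : i + 2 ≤ l := by omega
    rw [if_neg h0, if_neg h1]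
    obtain ⟨d, rfl⟩ : ∃ d, l = i + 2 + d := ⟨l - i - 2, by omega⟩
    rw [show i + 2 + d + (n - i) = d + 2 + n from by omega, Nat.add_mod_right,
      show i + 2 + d + (n - (i + 1)) = d + 1 + n from by omega, Nat.add_mod_right,
      show i + 2 + d + (n - (i + 2)) = d + n from by omega, Nat.add_mod_right,
      Nat.mod_eq_of_lt (show d + 2 < n from by omega),
      Nat.mod_eq_of_lt (show d + 1 < n from by omega),
      Nat.mod_eq_of_lt (show d < n from by omega)]
    rw [hrec (d + 1)]
    ring

lemma wB (L : ℕ → ℝ) (hL0 : L 0 = 2) (hL1 : L 1 = 1)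
    (hrec : ∀ m : ℕ, L (m + 2) = L (m + 1) + L m) (n l : ℕ) (hn : 2 ≤ n) (hl : l < n) :
    L ((l + (n - (n - 2))) % n + 1) - 3 * L ((l + (n - (n - 1))) % n + 1) =
    if l + 3 ≤ n then L (l + 3) - 3 * L (l + 2)
    else if l + 2 = n then 1 - 3 * L n else 0 := by
  rw [show n - (n - 2) = 2 from by omega, show n - (n - 1) = 1 from by omega]
  rcases Nat.lt_or_ge l (n - 2) with h | h
  · rw [if_pos (by omega),
      Nat.mod_eq_of_lt (show l + 2 < n from by omega),
      Nat.mod_eq_of_lt (show l + 1 < n from by omega)]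
  rcases eq_or_ne l (n - 2) with h1 | h1
  · rw [if_neg (by omega), if_pos (by omega),
      show l + 2 = n from by omega, Nat.mod_self,
      Nat.mod_eq_of_lt (show l + 1 < n from by omega),
      show l + 1 + 1 = n from by omega, zero_add, hL1]
  · have h2 : l = n - 1 := by omega
    rw [if_neg (by omega), if_neg (by omega), h2,
      show n - 1 + 2 = 1 + n from by omega, Nat.add_mod_right,
      Nat.mod_eq_of_lt (show 1 < n from by omega),
      show n - 1 + 1 = n from by omega, Nat.mod_self, zero_add, hL1]
    have h3 : L 2 = 3 := by rw [hrec 0, hL0, hL1]; norm_num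
    rw [show (1 : ℕ) + 1 = 2 from rfl, h3]
    ring

lemma wC (L : ℕ → ℝ) (hL1 : L 1 = 1) (n l : ℕ) (hn : 2 ≤ n) (hl : l < n) :
    L ((l + (n - (n - 1))) % n + 1) = if l + 1 = n then 1 else L (l + 2) := by
  rw [show n - (n - 1) = 1 from by omega]
  by_cases h : l + 1 = n
  · rw [if_pos h, h, Nat.mod_self, zero_add, hL1]
  · rw [if_neg h, Nat.mod_eq_of_lt (show l + 1 < n from by omega)]

/-! ### Sum helpers -/

lemma sum_ite_mul {n : ℕ} (c : ℕ) (hc : c < n) (v : ℝ) (f : Fin n → ℝ) :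
    (∑ k : Fin n, (if (k : ℕ) = c then v else 0) * f k) = v * f ⟨c, hc⟩ := by
  rw [Finset.sum_eq_single (⟨c, hc⟩ : Fin n)]
  · simp
  · intro b _ hb
    rw [if_neg (fun h => hb (Fin.ext h)), zero_mul]
  · intro h; exact absurd (Finset.mem_univ _) h

lemma sum_ite_const {n : ℕ} (c : ℕ) (hc : c < n) (v : ℝ) :
    (∑ k : Fin n, (if (k : ℕ) = c then v else 0)) = v := by
  rw [Finset.sum_eq_single (⟨c, hc⟩ : Fin n)]
  · simp
  · intro b _ hb
    rw [if_neg (fun h => hb (Fin.ext h))]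
  · intro h; exact absurd (Finset.mem_univ _) h

theorem det_circ1 (L : ℕ → ℝ) (hL0 : L 0 = 2) (hL1 : L 1 = 1)
    (hrec : ∀ m : ℕ, L (m + 2) = L (m + 1) + L m) (n : ℕ) (hn : 2 ≤ n) :
    (gCirc n 1 (fun m => L (m + 1))).det =
      (1 - L (n + 1)) ^ (n - 1) +
        (L n - 2) ^ (n - 2) *
          ∑ i ∈ Finset.Icc 1 (n - 1),
            (L (i + 2) - 3 * L (i + 1)) * ((1 - L (n + 1)) / (L n - 2)) ^ (i - 1) := by
  have hge3 := lucas_ge_three L hL0 hL1 hrec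
  set x := 1 - L (n + 1) with hxdef
  set z := L n - 2 with hzdef
  have hLn : 3 ≤ L n := by
    obtain ⟨m, hm⟩ : ∃ m, n = m + 2 := ⟨n - 2, by omega⟩
    rw [hm]; exact hge3 m
  have hLn1 : 3 ≤ L (n + 1) := by
    obtain ⟨m, hm⟩ : ∃ m, n + 1 = m + 2 := ⟨n - 1, by omega⟩
    rw [hm]; exact hge3 m
  have hx0 : x ≠ 0 := by rw [hxdef]; intro h; linarith
  have hz0 : z ≠ 0 := by rw [hzdef]; intro h; linarith
  set t := z / x with htdef
  have hxt : x * t = z := by rw [htdef]; field_simp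
  set C1 := gCirc n 1 (fun m => L (m + 1)) with hC1def
  have hC1 : ∀ k l : Fin n, C1 k l = L ((l.val + (n - k.val)) % n + 1) := by
    intro k l
    rw [hC1def]
    simp only [gCirc, Matrix.of_apply]
    rw [mul_one, Nat.mod_eq_of_lt k.isLt]
  have hW : ∀ i l : Fin n, (Umat n * C1) i l =
      L ((l.val + (n - i.val)) % n + 1)
      - (if i.val + 3 ≤ n then
          L ((l.val + (n - (i.val + 1))) % n + 1) +
          L ((l.val + (n - (i.val + 2))) % n + 1) else 0)
      - (if i.val + 2 = n then 3 * L ((l.val + (n - (n - 1))) % n + 1) else 0) := by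
    intro i l
    rw [Matrix.mul_apply]
    by_cases h3 : i.val + 3 ≤ n
    · have h2 : ¬ i.val + 2 = n := by omega
      simp only [Umat, Matrix.of_apply, h3, h2, true_and, false_and, if_true, if_false,
        ite_true, ite_false, sub_zero]
      simp only [sub_mul]
      rw [Finset.sum_sub_distrib, Finset.sum_sub_distrib,
        sum_ite_mul i.val i.isLt 1 (fun k => C1 k l),
        sum_ite_mul (i.val + 1) (by omega) 1 (fun k => C1 k l),
        sum_ite_mul (i.val + 2) (by omega) 1 (fun k => C1 k l),
        hC1, hC1, hC1]
      simp only [one_mul]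
      ring
    · by_cases h2 : i.val + 2 = n
      · simp only [Umat, Matrix.of_apply, h3, h2, true_and, false_and, if_true, if_false,
          ite_true, ite_false, sub_zero]
        simp only [sub_mul]
        rw [Finset.sum_sub_distrib,
          sum_ite_mul i.val i.isLt 1 (fun k => C1 k l),
          sum_ite_mul (n - 1) (by omega) 3 (fun k => C1 k l),
          hC1, hC1]
        simp only [one_mul]
      · simp only [Umat, Matrix.of_apply, h3, h2, true_and, false_and, if_true, if_false,
          ite_true, ite_false, sub_zero]
        rw [sum_ite_mul i.val i.isLt 1 (fun k => C1 k l), hC1]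
        simp only [one_mul]
  -- triangularity
  have htri : ∀ i j : Fin n, i < j → ((Umat n * C1) * Vmat n t) i j = 0 := by
    intro i j hij
    have hij' : i.val < j.val := hij
    have hjlt := j.isLt
    rw [Matrix.mul_apply]
    by_cases hj : j.val + 1 = n
    · rw [Finset.sum_eq_single j]
      · rw [hW]
        simp only [Vmat, Matrix.of_apply, if_pos hj, eq_self_iff_true, if_true, mul_one]
        by_cases h3 : i.val + 3 ≤ n
        · rw [if_pos h3, if_neg (by omega), sub_zero,
            wA L hL0 hL1 hrec n i.val j.val h3 j.isLt,
            if_neg (by omega), if_neg (by omega)]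
        · have h2 : i.val + 2 = n := by omega
          have hi2 : (i : ℕ) = n - 2 := by omega
          rw [if_neg h3, if_pos h2, hi2, sub_zero,
            wB L hL0 hL1 hrec n j.val hn j.isLt,
            if_neg (by omega), if_neg (by omega)]
      · intro b _ hb
        simp only [Vmat, Matrix.of_apply, if_pos hj, if_neg hb, mul_zero]
      · intro h; exact absurd (Finset.mem_univ _) h
    · have h3 : i.val + 3 ≤ n := by omega
      have hsummand : ∀ l : Fin n, ((Umat n * C1) i l) * Vmat n t l j =
          (if (l : ℕ) = i.val then x * t ^ (j.val - i.val) else 0) +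
          (if (l : ℕ) = i.val + 1 then (2 - L n) * t ^ (j.val - (i.val + 1)) else 0) := by
        intro l
        rw [hW, if_pos h3, if_neg (by omega), sub_zero,
          wA L hL0 hL1 hrec n i.val l.val h3 l.isLt]
        simp only [Vmat, Matrix.of_apply, if_neg hj]
        by_cases hl1 : (l : ℕ) = i.val
        · rw [hl1, if_pos rfl, if_pos (show (i : ℕ) ≤ (j : ℕ) from by omega), if_pos rfl,
            if_neg (show ¬((i : ℕ) = (i : ℕ) + 1) from by omega), add_zero]
        · by_cases hl2 : (l : ℕ) = i.val + 1
          · rw [hl2, if_neg (show ¬((i : ℕ) + 1 = (i : ℕ)) from by omega), if_pos rfl,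
              if_pos (show (i : ℕ) + 1 ≤ (j : ℕ) from by omega),
              if_neg (show ¬((i : ℕ) + 1 = (i : ℕ)) from by omega), if_pos rfl, zero_add]
          · rw [if_neg hl1, if_neg hl2, zero_mul, if_neg hl1, if_neg hl2, add_zero]
      rw [Finset.sum_congr rfl (fun l _ => hsummand l), Finset.sum_add_distrib,
        sum_ite_const i.val i.isLt _, sum_ite_const (i.val + 1) (by omega) _]
      have he : j.val - i.val = (j.val - (i.val + 1)) + 1 := by omega
      rw [he, pow_succ,
        show x * (t ^ (j.val - (i.val + 1)) * t) = x * t * t ^ (j.val - (i.val + 1)) from by ring,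
        hxt, hzdef]
      ring
  -- diagonal entries
  set D := ∑ l ∈ Finset.range (n - 1),
      (if l + 3 ≤ n then L (l + 3) - 3 * L (l + 2) else 1 - 3 * L n) * t ^ (n - 2 - l) with hDdef
  have hdiagA : ∀ i : Fin n, i.val + 3 ≤ n → ((Umat n * C1) * Vmat n t) i i = x := by
    intro i h3
    have hj : ¬ i.val + 1 = n := by omega
    rw [Matrix.mul_apply]
    have hsummand : ∀ l : Fin n, ((Umat n * C1) i l) * Vmat n t l i =
        (if (l : ℕ) = i.val then x else 0) := by
      intro l
      rw [hW, if_pos h3, if_neg (by omega), sub_zero,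
        wA L hL0 hL1 hrec n i.val l.val h3 l.isLt]
      simp only [Vmat, Matrix.of_apply, if_neg hj]
      by_cases hl1 : (l : ℕ) = i.val
      · rw [hl1, if_pos rfl, if_pos (le_refl _), Nat.sub_self, pow_zero, mul_one, if_pos rfl]
      · by_cases hl2 : (l : ℕ) = i.val + 1
        · rw [hl2, if_neg (show ¬((i : ℕ) + 1 = (i : ℕ)) from by omega), if_pos rfl,
            if_neg (show ¬((i : ℕ) + 1 ≤ (i : ℕ)) from by omega), mul_zero,
            if_neg (show ¬((i : ℕ) + 1 = (i : ℕ)) from by omega)]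
        · rw [if_neg hl1, if_neg hl2, zero_mul, if_neg hl1]
    rw [Finset.sum_congr rfl (fun l _ => hsummand l), sum_ite_const i.val i.isLt x]
  have hdiagC : ∀ i : Fin n, i.val + 1 = n → ((Umat n * C1) * Vmat n t) i i = 1 := by
    intro i h1
    rw [Matrix.mul_apply]
    rw [Finset.sum_eq_single i]
    · rw [hW, if_neg (by omega), if_neg (by omega), sub_zero, sub_zero,
        show (i : ℕ) + (n - (i : ℕ)) = n from by omega, Nat.mod_self]
      simp only [Vmat, Matrix.of_apply, if_pos h1, eq_self_iff_true, if_true, mul_one]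
      rw [show (0 : ℕ) + 1 = 1 from rfl, hL1]
    · intro b _ hb
      simp only [Vmat, Matrix.of_apply, if_pos h1, if_neg hb, mul_zero]
    · intro h; exact absurd (Finset.mem_univ _) h
  have hdiagB : ∀ i : Fin n, i.val + 2 = n → ((Umat n * C1) * Vmat n t) i i = D := by
    intro i h2
    have h3 : ¬ i.val + 3 ≤ n := by omega
    have hj : ¬ i.val + 1 = n := by omega
    have hi2 : (i : ℕ) = n - 2 := by omega
    rw [Matrix.mul_apply]
    have hsummand : ∀ l : Fin n, ((Umat n * C1) i l) * Vmat n t l i =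
        (fun c => (if c + 3 ≤ n then L (c + 3) - 3 * L (c + 2)
          else if c + 2 = n then 1 - 3 * L n else 0) *
          (if c ≤ n - 2 then t ^ (n - 2 - c) else 0)) l.val := by
      intro l
      rw [hW, if_neg h3, if_pos h2, sub_zero, hi2,
        wB L hL0 hL1 hrec n l.val hn l.isLt]
      simp only [Vmat, Matrix.of_apply, if_neg hj]
      rw [hi2]
    rw [Finset.sum_congr rfl (fun l _ => hsummand l),
      Fin.sum_univ_eq_sum_range (fun c => (if c + 3 ≤ n then L (c + 3) - 3 * L (c + 2)
          else if c + 2 = n then 1 - 3 * L n else 0) *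
          (if c ≤ n - 2 then t ^ (n - 2 - c) else 0)) n]
    have hr : Finset.range n = Finset.range ((n - 1) + 1) := by congr 1; omega
    rw [hr, Finset.sum_range_succ,
      if_neg (show ¬(n - 1 ≤ n - 2) from by omega), mul_zero, add_zero, hDdef]
    refine Finset.sum_congr rfl fun c hc => ?_
    rw [Finset.mem_range] at hc
    rw [if_pos (show c ≤ n - 2 from by omega)]
    by_cases h : c + 3 ≤ n
    · rw [if_pos h, if_pos h]
    · rw [if_neg h, if_neg h, if_pos (show c + 2 = n from by omega)]
  -- determinant
  have hdet : C1.det = ((Umat n * C1) * Vmat n t).det := by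
    rw [Matrix.det_mul, Matrix.det_mul, Umat_det, Vmat_det, one_mul, mul_one]
  have hlow : ((Umat n * C1) * Vmat n t).det = ∏ i : Fin n, ((Umat n * C1) * Vmat n t) i i :=
    Matrix.det_of_lowerTriangular _ (fun i j hij => htri i j hij)
  have hprod : (∏ i : Fin n, ((Umat n * C1) * Vmat n t) i i) = x ^ (n - 2) * D := by
    have hdiag : ∀ i : Fin n, ((Umat n * C1) * Vmat n t) i i =
        (fun c => if c + 3 ≤ n then x else if c + 2 = n then D else 1) i.val := by
      intro i
      by_cases h3 : i.val + 3 ≤ n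
      · simp only
        rw [if_pos h3, hdiagA i h3]
      · by_cases h2 : i.val + 2 = n
        · simp only
          rw [if_neg h3, if_pos h2, hdiagB i h2]
        · simp only
          rw [if_neg h3, if_neg h2, hdiagC i (by omega)]
    rw [Finset.prod_congr rfl (fun i _ => hdiag i),
      Fin.prod_univ_eq_prod_range (fun c => if c + 3 ≤ n then x else if c + 2 = n then D else 1) n]
    obtain ⟨m, hm⟩ : ∃ m, n = m + 2 := ⟨n - 2, by omega⟩
    have hr : Finset.range n = Finset.range (m + 1 + 1) := by rw [hm]
    rw [hr, Finset.prod_range_succ, Finset.prod_range_succ,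
      if_neg (show ¬(m + 1 + 3 ≤ n) from by omega), if_neg (show ¬(m + 1 + 2 = n) from by omega),
      if_neg (show ¬(m + 3 ≤ n) from by omega), if_pos (show m + 2 = n from by omega), mul_one]
    have hcon : ∀ c ∈ Finset.range m,
        (if c + 3 ≤ n then x else if c + 2 = n then D else 1) = x := by
      intro c hc; rw [Finset.mem_range] at hc; rw [if_pos (by omega)]
    rw [Finset.prod_congr rfl hcon, Finset.prod_const, Finset.card_range,
      show n - 2 = m from by omega]
  rw [hdet, hlow, hprod]
  -- final algebra
  have hIcc : (∑ i ∈ Finset.Icc 1 (n - 1), (L (i + 2) - 3 * L (i + 1)) * (x / z) ^ (i - 1))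
      = ∑ c ∈ Finset.range (n - 1), (L (c + 3) - 3 * L (c + 2)) * (x / z) ^ c := by
    rw [← Finset.Ico_add_one_right_eq_Icc, Finset.sum_Ico_eq_sum_range]
    refine Finset.sum_congr (by norm_num) fun c hc => ?_
    rw [show 1 + c + 2 = c + 3 from by omega, show 1 + c + 1 = c + 2 from by omega,
      show 1 + c - 1 = c from by omega]
  rw [hIcc, hDdef, Finset.mul_sum, Finset.mul_sum]
  have key1 : ∀ c, c ≤ n - 2 → x ^ (n - 2) * t ^ (n - 2 - c) = x ^ c * z ^ (n - 2 - c) := by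
    intro c hc
    set k := n - 2 - c with hk
    have hnk : n - 2 = c + k := by omega
    rw [hnk, pow_add, mul_assoc, ← mul_pow, hxt]
  have key2 : ∀ c, c ≤ n - 2 → z ^ (n - 2) * (x / z) ^ c = x ^ c * z ^ (n - 2 - c) := by
    intro c hc
    set k := n - 2 - c with hk
    have hnk : n - 2 = c + k := by omega
    rw [hnk, pow_add, div_pow]
    field_simp
  have hLs : ∀ c ∈ Finset.range (n - 1),
      x ^ (n - 2) * ((if c + 3 ≤ n then L (c + 3) - 3 * L (c + 2) else 1 - 3 * L n)
        * t ^ (n - 2 - c)) =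
      (if c + 3 ≤ n then L (c + 3) - 3 * L (c + 2) else 1 - 3 * L n)
        * (x ^ c * z ^ (n - 2 - c)) := by
    intro c hc
    rw [Finset.mem_range] at hc
    rw [show x ^ (n - 2) * ((if c + 3 ≤ n then L (c + 3) - 3 * L (c + 2) else 1 - 3 * L n)
        * t ^ (n - 2 - c)) = (if c + 3 ≤ n then L (c + 3) - 3 * L (c + 2) else 1 - 3 * L n)
        * (x ^ (n - 2) * t ^ (n - 2 - c)) from by ring, key1 c (by omega)]
  have hRs : ∀ c ∈ Finset.range (n - 1),
      z ^ (n - 2) * ((L (c + 3) - 3 * L (c + 2)) * (x / z) ^ c) =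
      (L (c + 3) - 3 * L (c + 2)) * (x ^ c * z ^ (n - 2 - c)) := by
    intro c hc
    rw [Finset.mem_range] at hc
    rw [show z ^ (n - 2) * ((L (c + 3) - 3 * L (c + 2)) * (x / z) ^ c)
        = (L (c + 3) - 3 * L (c + 2)) * (z ^ (n - 2) * (x / z) ^ c) from by ring,
      key2 c (by omega)]
  rw [Finset.sum_congr rfl hLs, Finset.sum_congr rfl hRs]
  have hr1 : Finset.range (n - 1) = Finset.range ((n - 2) + 1) := by congr 1; omega
  rw [hr1, Finset.sum_range_succ, Finset.sum_range_succ]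
  have heq : (∑ c ∈ Finset.range (n - 2),
      (if c + 3 ≤ n then L (c + 3) - 3 * L (c + 2) else 1 - 3 * L n)
        * (x ^ c * z ^ (n - 2 - c))) =
      ∑ c ∈ Finset.range (n - 2), (L (c + 3) - 3 * L (c + 2)) * (x ^ c * z ^ (n - 2 - c)) := by
    refine Finset.sum_congr rfl fun c hc => ?_
    rw [Finset.mem_range] at hc
    rw [if_pos (show c + 3 ≤ n from by omega)]
  rw [heq, if_neg (show ¬(n - 2 + 3 ≤ n) from by omega)]
  simp only [Nat.sub_self, pow_zero, mul_one]
  rw [show n - 2 + 3 = n + 1 from by omega, show n - 2 + 2 = n from by omega,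
    show n - 1 = (n - 2) + 1 from by omega, pow_succ]
  linear_combination (-(x ^ (n - 2))) * hxdef


/-- Determinant of the g-circulant matrix of Lucas numbers. -/
theorem det_gCirc_lucas
    (L : ℕ → ℝ) (hL0 : L 0 = 2) (hL1 : L 1 = 1)
    (hrec : ∀ m : ℕ, L (m + 2) = L (m + 1) + L m)
    (n r : ℕ) (hn : 2 ≤ n) (hgcd : Nat.gcd n r = 1) :
    (gCirc n r (fun m => L (m + 1))).det =
      (Qg n r).det *
        ((1 - L (n + 1)) ^ (n - 1) +
          (L n - 2) ^ (n - 2) *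
            ∑ i ∈ Finset.Icc 1 (n - 1),
              (L (i + 2) - 3 * L (i + 1)) *
                ((1 - L (n + 1)) / (L n - 2)) ^ (i - 1)) := by
  rw [gCirc_factor n r hn, Matrix.det_mul, det_circ1 L hL0 hL1 hrec n hn]
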